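/- arXiv:1802.00578 — 10 statements merged into one kernel-verified Lean document; each statement's English description precedes it below -/
import Mathlib

section
/- For a random variable X following the falling factorial distribution with parameter (n, θ), the mean of X equals θ·L_n(θ) where L_n(θ) = Σ_{i=1}^n 1/(θ+i-1). -/
open MeasureTheory ProbabilityTheory Finset

noncomputable def ellFn (m : ℕ) (θ : ℝ) : ℝ := ∑ i ∈ Finset.Icc 1 m, ((i : ℝ) - 1) / (θ + i - 1) ^ 2
noncomputable def Lfn (m : ℕ) (θ : ℝ) : ℝ := ∑ i ∈ Finset.Icc 1 m, 1 / (θ + i - 1)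
noncomputable def ffPMF (n : ℕ) (θ : ℝ) (x : ℕ) : ℝ :=
  ((ascPochhammer ℕ n).coeff x : ℝ) * θ ^ x / (ascPochhammer ℝ n).eval θ

section Aux

open Polynomial

lemma natCast_poly (m : ℕ) : ((m : ℝ[X])) = C (m : ℝ) := by simp

lemma natDeg_asc (n : ℕ) : (ascPochhammer ℕ n).natDegree = n := by
  induction n with
  | zero => simp
  | succ m ih =>
    rw [ascPochhammer_succ_right, Polynomial.Monic.natDegree_mul (monic_ascPochhammer ℕ m)
      (by rw [show ((m : ℕ[X])) = C (m : ℕ) by simp]; exact monic_X_add_C _)]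
    rw [ih, show ((m : ℕ[X])) = C (m : ℕ) by simp, natDegree_X_add_C]

lemma coeff_asc_real (n x : ℕ) :
    (ascPochhammer ℝ n).coeff x = ((ascPochhammer ℕ n).coeff x : ℝ) := by
  rw [← ascPochhammer_map (Nat.castRingHom ℝ) n, coeff_map]; rfl

lemma asc_prod (n : ℕ) : ascPochhammer ℝ n = ∏ i ∈ range n, (X + C (i : ℝ)) := by
  induction n with
  | zero => simp
  | succ m ih => rw [ascPochhammer_succ_right, prod_range_succ, ih, natCast_poly]

lemma asc_eval_prod (n : ℕ) (t : ℝ) :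
    (ascPochhammer ℝ n).eval t = ∏ i ∈ range n, (t + i) := by
  rw [asc_prod, eval_prod]; simp

lemma deriv_asc_eval (n : ℕ) (θ : ℝ) (hθ : 0 < θ) :
    (Polynomial.derivative (ascPochhammer ℝ n)).eval θ
      = (ascPochhammer ℝ n).eval θ * ∑ j ∈ range n, 1 / (θ + j) := by
  induction n with
  | zero => simp
  | succ m ih =>
    have hne : θ + (m:ℝ) ≠ 0 := by positivity
    rw [ascPochhammer_succ_right, natCast_poly, derivative_mul, eval_add, eval_mul, eval_mul,
      ih, derivative_add, derivative_X, derivative_C, add_zero, eval_mul, eval_one,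
      sum_range_succ (f := fun j => 1/(θ+(j:ℝ))), eval_add, eval_X, eval_C]
    field_simp

lemma natDeg_asc_real (n : ℕ) : (ascPochhammer ℝ n).natDegree = n := by
  rw [← ascPochhammer_map (Nat.castRingHom ℝ) n,
    natDegree_map_eq_of_injective (Nat.cast_injective), natDeg_asc]

lemma deriv_asc_sum (n : ℕ) (θ : ℝ) :
    (Polynomial.derivative (ascPochhammer ℝ n)).eval θ
      = ∑ i ∈ range (n + 1), ((ascPochhammer ℕ n).coeff i : ℝ) * (i * θ ^ (i - 1)) := by
  have hfun : (fun t : ℝ => (ascPochhammer ℝ n).eval t)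
      = fun t : ℝ => ∑ i ∈ range (n + 1), ((ascPochhammer ℕ n).coeff i : ℝ) * t ^ i := by
    funext t
    rw [eval_eq_sum_range' (n := n+1) (by rw [natDeg_asc_real]; omega) t]
    exact Finset.sum_congr rfl fun i _ => by rw [coeff_asc_real]
  have hd : HasDerivAt
      (fun t : ℝ => ∑ i ∈ range (n + 1), ((ascPochhammer ℕ n).coeff i : ℝ) * t ^ i)
      (∑ i ∈ range (n + 1), ((ascPochhammer ℕ n).coeff i : ℝ) * (i * θ ^ (i - 1))) θ :=
    HasDerivAt.fun_sum fun i _ => (hasDerivAt_pow i θ).const_mul _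
  rw [← Polynomial.deriv, hfun, hd.deriv]

lemma asc_eval_pos (n : ℕ) {θ : ℝ} (hθ : 0 < θ) : 0 < (ascPochhammer ℝ n).eval θ := by
  rw [asc_eval_prod]
  exact Finset.prod_pos fun i _ => by positivity

lemma pmf_nonneg (n : ℕ) {θ : ℝ} (hθ : 0 < θ) (x : ℕ) : 0 ≤ ffPMF n θ x := by
  have := asc_eval_pos n hθ
  unfold ffPMF; positivity

lemma pmf_zero_of_gt (n : ℕ) (θ : ℝ) {x : ℕ} (h : n < x) : ffPMF n θ x = 0 := by
  unfold ffPMF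
  rw [Polynomial.coeff_eq_zero_of_natDegree_lt (by rw [natDeg_asc]; exact h)]
  simp

lemma sum_pmf_one (n : ℕ) {θ : ℝ} (hθ : 0 < θ) : ∑ x ∈ range (n + 1), ffPMF n θ x = 1 := by
  have hP := asc_eval_pos n hθ
  unfold ffPMF
  rw [← Finset.sum_div, div_eq_one_iff_eq hP.ne']
  rw [eval_eq_sum_range' (n := n+1) (by rw [natDeg_asc_real]; omega) θ]
  exact Finset.sum_congr rfl fun i _ => by rw [coeff_asc_real]

lemma Lfn_eq (n : ℕ) (θ : ℝ) : Lfn n θ = ∑ j ∈ range n, 1 / (θ + j) := by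
  unfold Lfn
  rw [← Finset.Ico_add_one_right_eq_Icc, Finset.sum_Ico_eq_sum_range]
  refine Finset.sum_congr (by norm_num) fun j _ => ?_
  push_cast
  ring_nf

lemma mean_formula (n : ℕ) {θ : ℝ} (hθ : 0 < θ) :
    ∑ x ∈ range (n + 1), ffPMF n θ x * x = θ * Lfn n θ := by
  have hP := asc_eval_pos n hθ
  have step : ∀ x ∈ range (n + 1),
      ffPMF n θ x * x
        = θ * (((ascPochhammer ℕ n).coeff x : ℝ) * (x * θ ^ (x - 1))) / (ascPochhammer ℝ n).eval θ := by
    intro x _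
    unfold ffPMF
    cases x with
    | zero => simp
    | succ m => simp only [Nat.add_sub_cancel, pow_succ]; push_cast; ring
  rw [Finset.sum_congr rfl step, ← Finset.sum_div, ← Finset.mul_sum, ← deriv_asc_sum,
    deriv_asc_eval n θ hθ, Lfn_eq]
  field_simp

end Aux

theorem ff_mean (Ω : Type*) [MeasurableSpace Ω] (μ : Measure Ω) [IsProbabilityMeasure μ]
    (X : Ω → ℕ) (n : ℕ) (θ : ℝ) (hn : 1 ≤ n) (hθ : 0 < θ)
    (hX : ∀ x : ℕ, μ {ω | X ω = x} = ENNReal.ofReal (ffPMF n θ x)) :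
    ∫ ω, (X ω : ℝ) ∂μ = θ * Lfn n θ := by
  classical
  set A : ℕ → Set Ω := fun x => {ω | X ω = x} with hA
  have hμA : ∀ x, μ (A x) = ENNReal.ofReal (ffPMF n θ x) := hX
  have hnn : ∀ x, 0 ≤ ffPMF n θ x := pmf_nonneg n hθ
  have htsum : ∑' x : ℕ, ENNReal.ofReal (ffPMF n θ x) = 1 := by
    rw [tsum_eq_sum (s := range (n+1)) (fun b hb => by
      rw [pmf_zero_of_gt n θ (by simpa using hb), ENNReal.ofReal_zero])]
    rw [← ENNReal.ofReal_sum_of_nonneg (fun i _ => hnn i), sum_pmf_one n hθ, ENNReal.ofReal_one]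
  -- construct measurable versions of the fibers
  have hB : ∀ x : ℕ, ∃ B : Set Ω, MeasurableSet B ∧ A x =ᵐ[μ] B := by
    intro x
    set Bx := toMeasurable μ (A x) with hBx
    set Cx := toMeasurable μ (A x)ᶜ with hCx
    have hAB : A x ⊆ Bx := subset_toMeasurable μ _
    have hAC : (A x)ᶜ ⊆ Cx := subset_toMeasurable μ _
    have hBm : MeasurableSet Bx := measurableSet_toMeasurable μ _
    have hCm : MeasurableSet Cx := measurableSet_toMeasurable μ _
    have hUnion : Bx ∪ Cx = Set.univ := by
      apply Set.eq_univ_of_univ_subset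
      intro ω _
      by_cases h : ω ∈ A x
      · exact Or.inl (hAB h)
      · exact Or.inr (hAC h)
    have hcompl_le : μ ((A x)ᶜ) ≤ ∑' y : ℕ, if y = x then 0 else ENNReal.ofReal (ffPMF n θ y) := by
      have hsub : (A x)ᶜ ⊆ ⋃ y : ℕ, (if y = x then (∅ : Set Ω) else A y) := by
        intro ω hω
        refine Set.mem_iUnion.mpr ⟨X ω, ?_⟩
        rw [if_neg (show ¬ X ω = x from hω)]
        exact rfl
      refine (measure_mono hsub).trans ((measure_iUnion_le _).trans_eq (tsum_congr fun y => ?_))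
      split_ifs with h
      · simp
      · rw [hμA y]
    have hsum_le : μ Bx + μ Cx ≤ 1 := by
      rw [measure_toMeasurable, measure_toMeasurable, hμA x]
      calc ENNReal.ofReal (ffPMF n θ x) + μ ((A x)ᶜ)
          ≤ ENNReal.ofReal (ffPMF n θ x)
            + ∑' y : ℕ, if y = x then 0 else ENNReal.ofReal (ffPMF n θ y) :=
            add_le_add (le_refl _) hcompl_le
        _ = ∑' y : ℕ, ENNReal.ofReal (ffPMF n θ y) := by
            rw [eq_comm]
            convert ENNReal.tsum_eq_add_tsum_ite (f := fun y => ENNReal.ofReal (ffPMF n θ y)) x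
              using 4
            split_ifs <;> rfl
        _ = 1 := htsum
    have hint : μ (Bx ∩ Cx) = 0 := by
      have h1 : μ (Bx ∪ Cx) + μ (Bx ∩ Cx) = μ Bx + μ Cx := measure_union_add_inter _ hCm
      rw [hUnion, measure_univ] at h1
      have h2 : (1 : ENNReal) + μ (Bx ∩ Cx) ≤ 1 + 0 := by
        rw [add_zero, h1]; exact hsum_le
      exact le_zero_iff.mp (ENNReal.le_of_add_le_add_left (by norm_num) h2)
    refine ⟨Bx, hBm, (MeasureTheory.ae_eq_set.mpr ⟨?_, ?_⟩)⟩
    · rw [Set.diff_eq_empty.mpr hAB, measure_empty]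
    · have hsub2 : Bx \ A x ⊆ Bx ∩ Cx := fun ω hω => ⟨hω.1, hAC hω.2⟩
      exact measure_mono_null hsub2 hint
  choose B hBm hABae using hB
  have hμB : ∀ x, μ (B x) = ENNReal.ofReal (ffPMF n θ x) := fun x => by
    rw [← measure_congr (hABae x), hμA x]
  have hae : (fun ω => (X ω : ℝ))
      =ᵐ[μ] fun ω => ∑ x ∈ range (n+1), (B x).indicator (fun _ => (x:ℝ)) ω := by
    have h1 : ∀ᵐ ω ∂μ, X ω < n + 1 := by
      rw [ae_iff]
      have hsub : {ω | ¬ X ω < n + 1} ⊆ ⋃ k : ℕ, A ((n+1) + k) := by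
        intro ω hω
        simp only [Set.mem_setOf_eq, not_lt] at hω
        exact Set.mem_iUnion.mpr ⟨X ω - (n+1), (Nat.add_sub_cancel' hω).symm⟩
      refine measure_mono_null hsub (measure_iUnion_null fun k => ?_)
      rw [hμA, pmf_zero_of_gt n θ (by omega), ENNReal.ofReal_zero]
    have h2 : ∀ᵐ ω ∂μ, ∀ x ∈ range (n+1), (ω ∈ A x ↔ ω ∈ B x) := by
      rw [Filter.eventually_all_finset]
      intro x _
      exact Filter.eventuallyEq_set.mp (hABae x)
    filter_upwards [h1, h2] with ω hω hmem
    have hXmem : X ω ∈ range (n+1) := mem_range.mpr hω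
    show (X ω : ℝ) = ∑ x ∈ range (n+1), (B x).indicator (fun _ => (x:ℝ)) ω
    rw [Finset.sum_eq_single_of_mem (X ω) hXmem ?_]
    · rw [Set.indicator_of_mem ((hmem _ hXmem).mp rfl)]
    · intro y hy hne
      refine Set.indicator_of_notMem (fun hmemB => hne ?_) _
      have : ω ∈ A y := (hmem y hy).mpr hmemB
      exact this.symm ▸ rfl
  rw [integral_congr_ae hae]
  rw [integral_finset_sum _ (fun x _ => (integrable_const _).indicator (hBm x))]
  have hterm : ∀ x ∈ range (n+1),
      ∫ ω, (B x).indicator (fun _ => (x:ℝ)) ω ∂μ = ffPMF n θ x * x := by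
    intro x _
    rw [integral_indicator_const _ (hBm x), measureReal_def, hμB x, ENNReal.toReal_ofReal (hnn x), smul_eq_mul]
  rw [Finset.sum_congr rfl hterm, mean_formula n hθ]
end

section
/- A random variable X following the falling factorial distribution with parameter (n, θ) has the same distribution as a sum of n independent Bernoulli random variables ξ_1,...,ξ_n where ξ_j has success probability θ/(θ+j-1). -/
open MeasureTheory ProbabilityTheory Finset

open Polynomial

lemma ascEvalPos (θ : ℝ) (hθ : 0 < θ) : ∀ m, 0 < (ascPochhammer ℝ m).eval θ := by
  intro m
  induction m with
  | zero => simp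
  | succ m ih =>
    rw [ascPochhammer_succ_eval]
    exact mul_pos ih (by positivity)

lemma ascCoeff_succ (m x : ℕ) :
    (ascPochhammer ℕ (m+1)).coeff (x+1)
      = (ascPochhammer ℕ m).coeff x + m * (ascPochhammer ℕ m).coeff (x+1) := by
  rw [ascPochhammer_succ_right, mul_add, coeff_add, coeff_mul_X]
  congr 1
  rw [← C_eq_natCast, coeff_mul_C, mul_comm]; simp

lemma ascCoeff_succ_zero (m : ℕ) :
    (ascPochhammer ℕ (m+1)).coeff 0 = m * (ascPochhammer ℕ m).coeff 0 := by
  rw [ascPochhammer_succ_right, mul_add, coeff_add, coeff_mul_X_zero]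
  rw [← C_eq_natCast, coeff_mul_C, mul_comm, zero_add]; simp

lemma ffPMF_nonneg (m : ℕ) (θ : ℝ) (hθ : 0 < θ) (x : ℕ) : 0 ≤ ffPMF m θ x := by
  unfold ffPMF
  apply div_nonneg (by positivity) (ascEvalPos θ hθ m).le

lemma ffPMF_succ (m x : ℕ) (θ : ℝ) (hθ : 0 < θ) :
    ffPMF (m+1) θ (x+1)
      = ffPMF m θ (x+1) * ((m:ℝ)/(θ+m)) + ffPMF m θ x * (θ/(θ+m)) := by
  have h1 := ascEvalPos θ hθ m
  have h2 : (0:ℝ) < θ + m := by positivity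
  unfold ffPMF
  rw [ascPochhammer_succ_eval, ascCoeff_succ]
  push_cast
  field_simp
  ring

lemma ffPMF_succ_zero (m : ℕ) (θ : ℝ) (hθ : 0 < θ) :
    ffPMF (m+1) θ 0 = ffPMF m θ 0 * ((m:ℝ)/(θ+m)) := by
  have h1 := ascEvalPos θ hθ m
  have h2 : (0:ℝ) < θ + m := by positivity
  unfold ffPMF
  rw [ascPochhammer_succ_eval, ascCoeff_succ_zero]
  push_cast
  field_simp

lemma ffKey {Ω' : Type*} [MeasurableSpace Ω'] (μ' : Measure Ω') [IsProbabilityMeasure μ']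
    (n : ℕ) (θ : ℝ) (hθ : 0 < θ) (ξ : Fin n → Ω' → ℕ) (hξm : ∀ j, Measurable (ξ j))
    (hindep : iIndepFun ξ μ')
    (hBer : ∀ j : Fin n, ∀ ω : Ω', ξ j ω = 0 ∨ ξ j ω = 1)
    (hp : ∀ j : Fin n, μ' {ω | ξ j ω = 1} = ENNReal.ofReal (θ / (θ + (j : ℕ)))) :
    ∀ m, m ≤ n → ∀ x : ℕ,
      μ' {ω | ∑ j ∈ Finset.univ.filter (fun j : Fin n => (j:ℕ) < m), ξ j ω = x}
        = ENNReal.ofReal (ffPMF m θ x) := by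
  intro m
  induction m with
  | zero =>
    intro _ x
    have he : Finset.univ.filter (fun j : Fin n => (j:ℕ) < 0) = ∅ := by
      apply Finset.filter_false_of_mem; intro j _; omega
    rw [he]
    simp only [Finset.sum_empty]
    cases x with
    | zero =>
      simp only [Set.setOf_true, measure_univ]
      unfold ffPMF
      norm_num [ascPochhammer_zero]
    | succ y =>
      have h0 : {ω : Ω' | (0:ℕ) = y + 1} = ∅ := by ext ω; simp
      have h1 : ffPMF 0 θ (y+1) = 0 := by
        unfold ffPMF
        simp [ascPochhammer_zero, Polynomial.coeff_one]
      rw [h0, h1]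
      simp
  | succ m ih =>
    intro hm x
    have hmn : m < n := by omega
    set j₀ : Fin n := ⟨m, hmn⟩ with hj₀def
    set s : Finset (Fin n) := Finset.univ.filter (fun j : Fin n => (j:ℕ) < m) with hs
    have hj₀s : j₀ ∉ s := by simp [hs, hj₀def]
    have hins : Finset.univ.filter (fun j : Fin n => (j:ℕ) < m + 1) = insert j₀ s := by
      ext j
      simp only [Finset.mem_filter, Finset.mem_univ, true_and, Finset.mem_insert, hs, hj₀def,
        Fin.ext_iff]
      omega
    set S : Ω' → ℕ := fun ω => ∑ j ∈ s, ξ j ω with hS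
    have hSm : Measurable S := Finset.measurable_sum s fun j _ => hξm j
    have hsum : ∀ ω, ∑ j ∈ Finset.univ.filter (fun j : Fin n => (j:ℕ) < m + 1), ξ j ω
        = ξ j₀ ω + S ω := by
      intro ω; rw [hins, Finset.sum_insert hj₀s]
    have hI : IndepFun S (ξ j₀) μ' := by
      have := hindep.indepFun_finsetSum_of_notMem hξm hj₀s
      have hfe : (∑ j ∈ s, ξ j) = S := by
        funext ω; rw [Finset.sum_apply]
      rwa [hfe] at this
    have hmul : ∀ a b : ℕ,
        μ' ({ω | S ω = a} ∩ {ω | ξ j₀ ω = b}) = μ' {ω | S ω = a} * μ' {ω | ξ j₀ ω = b} := by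
      intro a b
      have := hI.measure_inter_preimage_eq_mul {a} {b}
        (measurableSet_singleton a) (measurableSet_singleton b)
      simpa [Set.preimage, Set.mem_singleton_iff] using this
    have hmeas1 : ∀ b : ℕ, MeasurableSet {ω | ξ j₀ ω = b} := fun b =>
      hξm j₀ (measurableSet_singleton b)
    have hP1 : μ' {ω | ξ j₀ ω = 1} = ENNReal.ofReal (θ / (θ + m)) := by
      have := hp j₀; simpa using this
    have hP0 : μ' {ω | ξ j₀ ω = 0} = ENNReal.ofReal ((m:ℝ) / (θ + m)) := by
      have hc : {ω | ξ j₀ ω = 0} = {ω | ξ j₀ ω = 1}ᶜ := by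
        ext ω
        rcases hBer j₀ ω with h | h <;> simp [h]
      rw [hc, prob_compl_eq_one_sub (hmeas1 1), hP1]
      have harith : (m:ℝ) / (θ + m) = 1 - θ / (θ + m) := by
        have : (0:ℝ) < θ + m := by positivity
        field_simp
        ring
      rw [harith, ENNReal.ofReal_sub _ (by positivity), ENNReal.ofReal_one]
    have hle : m ≤ n := hmn.le
    cases x with
    | zero =>
      have hset : {ω | ∑ j ∈ Finset.univ.filter (fun j : Fin n => (j:ℕ) < m + 1), ξ j ω = 0}
          = {ω | S ω = 0} ∩ {ω | ξ j₀ ω = 0} := by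
        ext ω
        simp only [Set.mem_setOf_eq, Set.mem_inter_iff, hsum ω]
        omega
      rw [hset, hmul, ih hle 0, hP0, ← ENNReal.ofReal_mul (ffPMF_nonneg m θ hθ 0),
        ← ffPMF_succ_zero m θ hθ]
    | succ y =>
      have hset : {ω | ∑ j ∈ Finset.univ.filter (fun j : Fin n => (j:ℕ) < m + 1), ξ j ω = y + 1}
          = ({ω | S ω = y + 1} ∩ {ω | ξ j₀ ω = 0}) ∪ ({ω | S ω = y} ∩ {ω | ξ j₀ ω = 1}) := by
        ext ω
        simp only [Set.mem_setOf_eq, Set.mem_inter_iff, Set.mem_union, hsum ω]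
        rcases hBer j₀ ω with h | h <;> simp [h] <;> omega
      have hdisj : Disjoint ({ω : Ω' | S ω = y + 1} ∩ {ω | ξ j₀ ω = 0})
          (({ω : Ω' | S ω = y} ∩ {ω | ξ j₀ ω = 1})) := by
        apply Set.disjoint_left.mpr
        rintro ω ⟨_, h0⟩ ⟨_, h1⟩
        simp only [Set.mem_setOf_eq] at h0 h1
        omega
      have hm2 : MeasurableSet ({ω : Ω' | S ω = y} ∩ {ω | ξ j₀ ω = 1}) :=
        (hSm (measurableSet_singleton y)).inter (hmeas1 1)
      rw [hset, measure_union hdisj hm2, hmul, hmul, ih hle (y+1), ih hle y, hP0, hP1,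
        ← ENNReal.ofReal_mul (ffPMF_nonneg m θ hθ (y+1)),
        ← ENNReal.ofReal_mul (ffPMF_nonneg m θ hθ y),
        ← ENNReal.ofReal_add (mul_nonneg (ffPMF_nonneg m θ hθ (y+1)) (by positivity))
          (mul_nonneg (ffPMF_nonneg m θ hθ y) (by positivity)),
        ← ffPMF_succ m y θ hθ]

theorem ff_bernoulli_sum (Ω : Type*) [MeasurableSpace Ω] (μ : Measure Ω) [IsProbabilityMeasure μ]
    (X : Ω → ℕ) (hXm : Measurable X) (n : ℕ) (θ : ℝ) (hn : 1 ≤ n) (hθ : 0 < θ)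
    (hX : ∀ x : ℕ, μ {ω | X ω = x} = ENNReal.ofReal (ffPMF n θ x))
    (Ω' : Type*) [MeasurableSpace Ω'] (μ' : Measure Ω') [IsProbabilityMeasure μ']
    (ξ : Fin n → Ω' → ℕ) (hξm : ∀ j, Measurable (ξ j))
    (hindep : iIndepFun ξ μ')
    (hBer : ∀ j : Fin n, ∀ ω : Ω', ξ j ω = 0 ∨ ξ j ω = 1)
    (hp : ∀ j : Fin n, μ' {ω | ξ j ω = 1} = ENNReal.ofReal (θ / (θ + (j : ℕ)))) :
    Measure.map X μ = Measure.map (fun ω => ∑ j : Fin n, ξ j ω) μ' := by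
  have hsumm : Measurable (fun ω => ∑ j : Fin n, ξ j ω) :=
    Finset.measurable_sum Finset.univ fun j _ => hξm j
  apply MeasureTheory.Measure.ext_of_singleton
  intro x
  rw [Measure.map_apply hXm (measurableSet_singleton x),
    Measure.map_apply hsumm (measurableSet_singleton x)]
  have huniv : Finset.univ.filter (fun j : Fin n => (j:ℕ) < n) = Finset.univ := by
    apply Finset.filter_true_of_mem; intro j _; exact j.isLt
  have hkey := ffKey μ' n θ hθ ξ hξm hindep hBer hp n le_rfl x
  rw [huniv] at hkey
  have h1 : X ⁻¹' {x} = {ω | X ω = x} := rfl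
  have h2 : (fun ω => ∑ j : Fin n, ξ j ω) ⁻¹' {x} = {ω : Ω' | ∑ j : Fin n, ξ j ω = x} := rfl
  rw [h1, h2, hX x, hkey]
end

section
/- Let θ ≥ 2 be real, s ≥ 2 an integer, and n an integer with n > 1 + (⌊θ⌋ − 1 + 1/s)/ℓ_{⌊θ⌋}(θ). Then s·ℓ_n(θ) > ℓ_{ns}(θ). -/
open MeasureTheory ProbabilityTheory Finset

set_option maxHeartbeats 1600000

/-- Rewriting `ellFn` as a sum over `range`. -/
lemma ellFn_eq_range (m : ℕ) (θ : ℝ) :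
    ellFn m θ = ∑ j ∈ Finset.range m, (j : ℝ) / (θ + j) ^ 2 := by
  unfold ellFn
  rw [← Finset.Ico_add_one_right_eq_Icc, Finset.sum_Ico_eq_sum_range]
  have hm : m + 1 - 1 = m := by omega
  rw [hm]
  refine Finset.sum_congr rfl fun j _ => ?_
  push_cast
  ring

/-- The map `x ↦ x/(θ+x)^2` is antitone past the peak. -/
lemma aux_dec (θ a b : ℝ) (hθ : 0 < θ) (ha : 0 ≤ a) (hab : a ≤ b) (hab2 : θ ^ 2 ≤ a * b) :
    b / (θ + b) ^ 2 ≤ a / (θ + a) ^ 2 := by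
  have h1 : 0 < θ + a := by linarith
  have h2 : 0 < θ + b := by linarith
  rw [div_le_div_iff₀ (pow_pos h2 2) (pow_pos h1 2)]
  nlinarith [mul_nonneg (sub_nonneg.2 hab) (sub_nonneg.2 hab2)]

lemma aux_key (θ H N : ℝ) (hθ : 2 ≤ θ) (hN : 4 * θ + 1 ≤ N)
    (hH : 2 * H = N ∨ 2 * H + 1 = N) :
    0 < (H - θ / 2 - 1) * H * ((θ + N) ^ 2 * (θ + N + H) ^ 2)
      + (N - 2 * H) * N * ((θ + H) ^ 2 * (θ + N + H) ^ 2)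
      - (N - H) * (N + H) * ((θ + H) ^ 2 * (θ + N) ^ 2) := by
  have he : (0:ℝ) ≤ θ - 2 := by linarith
  rcases hH with h | h
  · subst h
    have hv : (0:ℝ) ≤ 2 * H - (4 * θ + 1) := by linarith
    nlinarith [mul_nonneg he hv, mul_nonneg (mul_nonneg he he) hv,
      mul_nonneg (mul_nonneg hv hv) he, mul_nonneg he he, mul_nonneg hv hv,
      mul_nonneg (mul_nonneg he he) (mul_nonneg he he),
      mul_nonneg (mul_nonneg hv hv) (mul_nonneg hv hv),
      mul_nonneg (mul_nonneg he he) (mul_nonneg hv hv),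
      mul_nonneg (mul_nonneg (mul_nonneg he he) he) hv,
      mul_nonneg (mul_nonneg (mul_nonneg hv hv) hv) he]
  · subst h
    have hv : (0:ℝ) ≤ 2 * H - 4 * θ := by linarith
    nlinarith [mul_nonneg he hv, mul_nonneg (mul_nonneg he he) hv,
      mul_nonneg (mul_nonneg hv hv) he, mul_nonneg he he, mul_nonneg hv hv,
      mul_nonneg (mul_nonneg he he) (mul_nonneg he he),
      mul_nonneg (mul_nonneg hv hv) (mul_nonneg hv hv),
      mul_nonneg (mul_nonneg he he) (mul_nonneg hv hv),
      mul_nonneg (mul_nonneg (mul_nonneg he he) he) hv,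
      mul_nonneg (mul_nonneg (mul_nonneg hv hv) hv) he]

theorem th0_part1 (θ : ℝ) (hθ : 2 ≤ θ) (s n : ℕ) (hs : 2 ≤ s)
    (hn : (n : ℝ) > 1 + ((⌊θ⌋₊ : ℝ) - 1 + 1 / s) / ellFn ⌊θ⌋₊ θ) :
    s * ellFn n θ > ellFn (n * s) θ := by
  have hθ0 : (0:ℝ) < θ := by linarith
  set m : ℕ := ⌊θ⌋₊ with hm_def
  have hm2 : 2 ≤ m := Nat.le_floor (by exact_mod_cast hθ)
  have hmθ : (m : ℝ) ≤ θ := Nat.floor_le hθ0.le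
  have hm1R : (1:ℝ) ≤ (m:ℝ) - 1 := by
    have : (2:ℝ) ≤ (m:ℝ) := by exact_mod_cast hm2
    linarith
  have hterm_nonneg : ∀ j : ℕ, (0:ℝ) ≤ (j : ℝ) / (θ + j) ^ 2 := fun j => by positivity
  -- positivity of ellFn m θ
  have hpos : 0 < ellFn m θ := by
    rw [ellFn_eq_range]
    have h1m : 1 ∈ Finset.range m := Finset.mem_range.2 (by omega)
    have hle : (1:ℝ) / (θ + 1) ^ 2 ≤ ∑ j ∈ Finset.range m, (j : ℝ) / (θ + j) ^ 2 := by
      have := Finset.single_le_sum (f := fun j : ℕ => (j : ℝ) / (θ + j) ^ 2)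
        (fun j _ => hterm_nonneg j) h1m
      simpa using this
    have hθ1 : (0:ℝ) < θ + 1 := by linarith
    have hp : (0:ℝ) < (1:ℝ) / (θ + 1) ^ 2 := by
      exact div_pos one_pos (pow_pos hθ1 2)
    linarith
  -- upper bound on ellFn m θ
  have hup : ellFn m θ ≤ ((m:ℝ) - 1) / (4 * θ) := by
    rw [ellFn_eq_range, Finset.range_eq_Ico,
      ← Finset.sum_Ico_consecutive _ (Nat.zero_le 1) (by omega : 1 ≤ m)]
    have h0 : ∑ j ∈ Finset.Ico (0:ℕ) 1, (j : ℝ) / (θ + j) ^ 2 = 0 := by simp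
    have h1 : ∑ j ∈ Finset.Ico (1:ℕ) m, (j : ℝ) / (θ + j) ^ 2
        ≤ (Finset.Ico (1:ℕ) m).card • (1 / (4 * θ)) := by
      refine Finset.sum_le_card_nsmul _ _ _ fun j _ => ?_
      have hj0 : (0:ℝ) ≤ (j:ℝ) := Nat.cast_nonneg j
      have hθj : (0:ℝ) < θ + j := by linarith
      rw [div_le_div_iff₀ (pow_pos hθj 2) (by linarith : (0:ℝ) < 4 * θ)]
      nlinarith [sq_nonneg (θ - (j:ℝ))]
    rw [Nat.card_Ico, nsmul_eq_mul, Nat.cast_sub (by omega : 1 ≤ m)] at h1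
    rw [h0, zero_add]
    calc ∑ j ∈ Finset.Ico (1:ℕ) m, (j : ℝ) / (θ + j) ^ 2
        ≤ ((m:ℝ) - 1) * (1 / (4 * θ)) := by exact_mod_cast h1
      _ = ((m:ℝ) - 1) / (4 * θ) := by ring
  -- threshold: n > 4θ + 1
  have hs0 : (0:ℝ) < 1 / (s:ℝ) := by
    have hsR : (0:ℝ) < (s:ℝ) := by exact_mod_cast Nat.lt_of_lt_of_le Nat.zero_lt_two hs
    positivity
  have hmul : 4 * θ * ellFn m θ ≤ (m:ℝ) - 1 := by
    have h := mul_le_mul_of_nonneg_left hup (by linarith : (0:ℝ) ≤ 4 * θ)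
    have he : 4 * θ * (((m:ℝ) - 1) / (4 * θ)) = (m:ℝ) - 1 := by field_simp
    linarith
  have hfrac : 4 * θ < ((m:ℝ) - 1 + 1 / s) / ellFn m θ := by
    rw [lt_div_iff₀ hpos]
    linarith
  have hn4 : 4 * θ + 1 < (n : ℝ) := by linarith
  have hn9 : 9 < n := by exact_mod_cast (show (9:ℝ) < (n:ℝ) by linarith)
  -- the split points
  set h : ℕ := n / 2 with hh_def
  set w : ℕ := ⌈θ / 2⌉₊ with hw_def
  have hw_lb : θ / 2 ≤ (w : ℝ) := Nat.le_ceil _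
  have hw_ub : (w : ℝ) < θ / 2 + 1 := Nat.ceil_lt_add_one (by positivity)
  have hnmod := Nat.div_add_mod n 2
  have hmod := Nat.mod_two_eq_zero_or_one n
  have hh_lb : ((n:ℝ) - 1) / 2 ≤ (h : ℝ) := by
    have h2 : n ≤ 2 * h + 1 := by omega
    have : (n:ℝ) ≤ 2 * (h:ℝ) + 1 := by exact_mod_cast h2
    linarith
  have hh_ub : (h : ℝ) ≤ (n:ℝ) / 2 := by
    have h2 : 2 * h ≤ n := by omega
    have : 2 * (h:ℝ) ≤ (n:ℝ) := by exact_mod_cast h2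
    linarith
  have hparity : 2 * (h:ℝ) = (n:ℝ) ∨ 2 * (h:ℝ) + 1 = (n:ℝ) := by
    rcases hmod with h0 | h1
    · left
      have : 2 * h = n := by omega
      exact_mod_cast this
    · right
      have : 2 * h + 1 = n := by omega
      exact_mod_cast this
  have hhR2θ : 2 * θ ≤ (h:ℝ) := by linarith
  have hθh : θ ≤ (h:ℝ) := by linarith
  have hwh : w ≤ h := by
    have : (w:ℝ) < (h:ℝ) := by linarith
    exact_mod_cast this.le
  have hhn : h ≤ n := Nat.div_le_self n 2
  have hθn : θ ≤ (n:ℝ) := by linarith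
  -- lower bound for ellFn n θ
  have hL1 : ((h:ℝ) - w) * ((h:ℝ) / (θ + h) ^ 2) + ((n:ℝ) - h) * ((n:ℝ) / (θ + n) ^ 2)
      ≤ ellFn n θ := by
    rw [ellFn_eq_range]
    have hsub : Finset.Ico w n ⊆ Finset.range n := by
      intro x hx
      exact Finset.mem_range.2 (Finset.mem_Ico.mp hx).2
    have hstep : ∑ j ∈ Finset.Ico w n, (j : ℝ) / (θ + j) ^ 2
        ≤ ∑ j ∈ Finset.range n, (j : ℝ) / (θ + j) ^ 2 :=
      Finset.sum_le_sum_of_subset_of_nonneg hsub (fun j _ _ => hterm_nonneg j)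
    rw [← Finset.sum_Ico_consecutive _ hwh hhn] at hstep
    have hb1 : (Finset.Ico w h).card • ((h:ℝ) / (θ + h) ^ 2)
        ≤ ∑ j ∈ Finset.Ico w h, (j : ℝ) / (θ + j) ^ 2 := by
      refine Finset.card_nsmul_le_sum _ _ _ fun j hj => ?_
      obtain ⟨hj1, hj2⟩ := Finset.mem_Ico.mp hj
      have hj1R : (w:ℝ) ≤ (j:ℝ) := by exact_mod_cast hj1
      have hj2R : (j:ℝ) ≤ (h:ℝ) := by exact_mod_cast hj2.le
      exact aux_dec θ j h hθ0 (Nat.cast_nonneg j) hj2R (by nlinarith)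
    have hb2 : (Finset.Ico h n).card • ((n:ℝ) / (θ + n) ^ 2)
        ≤ ∑ j ∈ Finset.Ico h n, (j : ℝ) / (θ + j) ^ 2 := by
      refine Finset.card_nsmul_le_sum _ _ _ fun j hj => ?_
      obtain ⟨hj1, hj2⟩ := Finset.mem_Ico.mp hj
      have hj1R : (h:ℝ) ≤ (j:ℝ) := by exact_mod_cast hj1
      have hj2R : (j:ℝ) ≤ (n:ℝ) := by exact_mod_cast hj2.le
      exact aux_dec θ j n hθ0 (Nat.cast_nonneg j) hj2R (by nlinarith)
    rw [Nat.card_Ico, nsmul_eq_mul, Nat.cast_sub hwh] at hb1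
    rw [Nat.card_Ico, nsmul_eq_mul, Nat.cast_sub hhn] at hb2
    linarith
  -- upper bound for the first tail block
  have hE3 : ∑ j ∈ Finset.Ico n (2 * n), (j : ℝ) / (θ + j) ^ 2
      ≤ (h:ℝ) * ((n:ℝ) / (θ + n) ^ 2) + ((n:ℝ) - h) * (((n:ℝ) + h) / (θ + n + h) ^ 2) := by
    have hs1 : n ≤ n + h := Nat.le_add_right _ _
    have hs2 : n + h ≤ 2 * n := by omega
    rw [← Finset.sum_Ico_consecutive _ hs1 hs2]
    have hb1 : ∑ j ∈ Finset.Ico n (n + h), (j : ℝ) / (θ + j) ^ 2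
        ≤ (Finset.Ico n (n + h)).card • ((n:ℝ) / (θ + n) ^ 2) := by
      refine Finset.sum_le_card_nsmul _ _ _ fun j hj => ?_
      obtain ⟨hj1, _⟩ := Finset.mem_Ico.mp hj
      have hj1R : (n:ℝ) ≤ (j:ℝ) := by exact_mod_cast hj1
      exact aux_dec θ n j hθ0 (Nat.cast_nonneg n) hj1R (by nlinarith)
    have hb2 : ∑ j ∈ Finset.Ico (n + h) (2 * n), (j : ℝ) / (θ + j) ^ 2
        ≤ (Finset.Ico (n + h) (2 * n)).card • (((n:ℝ) + h) / (θ + n + h) ^ 2) := by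
      refine Finset.sum_le_card_nsmul _ _ _ fun j hj => ?_
      obtain ⟨hj1, _⟩ := Finset.mem_Ico.mp hj
      have hj1R : ((n:ℝ) + h) ≤ (j:ℝ) := by
        have : ((n + h : ℕ):ℝ) ≤ (j:ℝ) := by exact_mod_cast hj1
        push_cast at this
        linarith
      have hnh0 : (0:ℝ) ≤ (n:ℝ) + h := by positivity
      have := aux_dec θ ((n:ℝ) + h) j hθ0 hnh0 hj1R (by nlinarith [Nat.cast_nonneg (α := ℝ) h])
      have hassoc : θ + ((n:ℝ) + h) = θ + n + h := by ring
      rw [hassoc] at this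
      exact this
    rw [Nat.card_Ico, nsmul_eq_mul] at hb1
    rw [Nat.card_Ico, nsmul_eq_mul] at hb2
    have hc1 : n + h - n = h := by omega
    have hc2 : 2 * n - (n + h) = n - h := by omega
    rw [hc1] at hb1
    rw [hc2, Nat.cast_sub hhn] at hb2
    linarith
  -- splitting off the tail of ellFn (n*s)
  have hns : n ≤ n * s := Nat.le_mul_of_pos_right n (by omega)
  have hE1 : ellFn (n * s) θ = ellFn n θ + ∑ j ∈ Finset.Ico n (n * s), (j : ℝ) / (θ + j) ^ 2 := by
    rw [ellFn_eq_range, ellFn_eq_range, Finset.range_eq_Ico, Finset.range_eq_Ico]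
    exact (Finset.sum_Ico_consecutive (fun j : ℕ => (j : ℝ) / (θ + j) ^ 2) (Nat.zero_le n) hns).symm
  -- tail bounded by (s-1) copies of the first block
  have hE2 : ∀ t : ℕ, 1 ≤ t → ∑ j ∈ Finset.Ico n (n * t), (j : ℝ) / (θ + j) ^ 2
      ≤ ((t:ℝ) - 1) * ∑ j ∈ Finset.Ico n (2 * n), (j : ℝ) / (θ + j) ^ 2 := by
    intro t ht
    induction t with
    | zero => omega
    | succ t ih =>
      rcases Nat.eq_or_lt_of_le ht with h1 | h1
      · simp [← h1]
      · have ht1 : 1 ≤ t := by omega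
        have hrec := ih ht1
        have hc1 : n ≤ n * t := Nat.le_mul_of_pos_right n (by omega)
        have hc2 : n * t ≤ n * (t + 1) := Nat.mul_le_mul le_rfl (by omega)
        rw [← Finset.sum_Ico_consecutive _ hc1 hc2]
        have ht1R : (1:ℝ) ≤ (t:ℝ) := by exact_mod_cast ht1
        have hblock : ∑ j ∈ Finset.Ico (n * t) (n * (t + 1)), (j : ℝ) / (θ + j) ^ 2
            ≤ ∑ j ∈ Finset.Ico n (2 * n), (j : ℝ) / (θ + j) ^ 2 := by
          rw [Finset.sum_Ico_eq_sum_range, Finset.sum_Ico_eq_sum_range]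
          have hlen1 : n * (t + 1) - n * t = n := by rw [Nat.mul_succ]; omega
          have hlen2 : 2 * n - n = n := by omega
          rw [hlen1, hlen2]
          refine Finset.sum_le_sum fun i _ => ?_
          have hle : n + i ≤ n * t + i := by
            have := Nat.le_mul_of_pos_right n (show 0 < t by omega)
            omega
          have hleR : (n:ℝ) + i ≤ (n:ℝ) * t + i := by
            have : ((n + i : ℕ):ℝ) ≤ ((n * t + i : ℕ):ℝ) := by exact_mod_cast hle
            push_cast at this
            linarith
          have hni0 : (0:ℝ) ≤ (n:ℝ) + i := by positivity
          have hprod : θ ^ 2 ≤ ((n:ℝ) + i) * ((n:ℝ) * t + i) := by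
            nlinarith [Nat.cast_nonneg (α := ℝ) i]
          have := aux_dec θ ((n:ℝ) + i) ((n:ℝ) * t + i) hθ0 hni0 hleR hprod
          push_cast
          exact this
        have hsnonneg : (0:ℝ) ≤ ∑ j ∈ Finset.Ico n (2 * n), (j : ℝ) / (θ + j) ^ 2 :=
          Finset.sum_nonneg fun j _ => hterm_nonneg j
        push_cast
        nlinarith
  -- key strict inequality
  have hkey : (h:ℝ) * ((n:ℝ) / (θ + n) ^ 2) + ((n:ℝ) - h) * (((n:ℝ) + h) / (θ + n + h) ^ 2)
      < ((h:ℝ) - w) * ((h:ℝ) / (θ + h) ^ 2) + ((n:ℝ) - h) * ((n:ℝ) / (θ + n) ^ 2) := by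
    have hP := aux_key θ (h:ℝ) (n:ℝ) hθ hn4.le hparity
    have hd1 : (0:ℝ) < θ + (h:ℝ) := by linarith
    have hd2 : (0:ℝ) < θ + (n:ℝ) := by linarith
    have hd3 : (0:ℝ) < θ + (n:ℝ) + (h:ℝ) := by linarith
    have hdenpos : (0:ℝ) < (θ + (h:ℝ)) ^ 2 * (θ + (n:ℝ)) ^ 2 * (θ + (n:ℝ) + (h:ℝ)) ^ 2 :=
      mul_pos (mul_pos (pow_pos hd1 2) (pow_pos hd2 2)) (pow_pos hd3 2)
    have hid : (((h:ℝ) - θ/2 - 1) * ((h:ℝ) / (θ + h) ^ 2) + ((n:ℝ) - h) * ((n:ℝ) / (θ + n) ^ 2))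
        - ((h:ℝ) * ((n:ℝ) / (θ + n) ^ 2) + ((n:ℝ) - h) * (((n:ℝ) + h) / (θ + n + h) ^ 2))
        = (((h:ℝ) - θ / 2 - 1) * (h:ℝ) * ((θ + (n:ℝ)) ^ 2 * (θ + (n:ℝ) + (h:ℝ)) ^ 2)
          + ((n:ℝ) - 2 * (h:ℝ)) * (n:ℝ) * ((θ + (h:ℝ)) ^ 2 * (θ + (n:ℝ) + (h:ℝ)) ^ 2)
          - ((n:ℝ) - (h:ℝ)) * ((n:ℝ) + (h:ℝ)) * ((θ + (h:ℝ)) ^ 2 * (θ + (n:ℝ)) ^ 2))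
          / ((θ + (h:ℝ)) ^ 2 * (θ + (n:ℝ)) ^ 2 * (θ + (n:ℝ) + (h:ℝ)) ^ 2) := by
      field_simp
      ring
    have hpos2 : 0 < (((h:ℝ) - θ/2 - 1) * ((h:ℝ) / (θ + h) ^ 2)
        + ((n:ℝ) - h) * ((n:ℝ) / (θ + n) ^ 2))
        - ((h:ℝ) * ((n:ℝ) / (θ + n) ^ 2) + ((n:ℝ) - h) * (((n:ℝ) + h) / (θ + n + h) ^ 2)) := by
      rw [hid]
      exact div_pos hP hdenpos
    have hfh : (0:ℝ) ≤ (h:ℝ) / (θ + h) ^ 2 := hterm_nonneg h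
    have hwcoef : ((h:ℝ) - θ/2 - 1) * ((h:ℝ) / (θ + h) ^ 2)
        ≤ ((h:ℝ) - w) * ((h:ℝ) / (θ + h) ^ 2) :=
      mul_le_mul_of_nonneg_right (by linarith) hfh
    linarith
  -- assemble
  have hs1 : (1:ℝ) ≤ (s:ℝ) - 1 := by
    have : (2:ℝ) ≤ (s:ℝ) := by exact_mod_cast hs
    linarith
  have hRL : (h:ℝ) * ((n:ℝ) / (θ + n) ^ 2) + ((n:ℝ) - h) * (((n:ℝ) + h) / (θ + n + h) ^ 2)
      < ellFn n θ := lt_of_lt_of_le hkey hL1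
  have htail : ∑ j ∈ Finset.Ico n (n * s), (j : ℝ) / (θ + j) ^ 2
      ≤ ((s:ℝ) - 1) * ((h:ℝ) * ((n:ℝ) / (θ + n) ^ 2)
        + ((n:ℝ) - h) * (((n:ℝ) + h) / (θ + n + h) ^ 2)) := by
    calc ∑ j ∈ Finset.Ico n (n * s), (j : ℝ) / (θ + j) ^ 2
        ≤ ((s:ℝ) - 1) * ∑ j ∈ Finset.Ico n (2 * n), (j : ℝ) / (θ + j) ^ 2 := hE2 s (by omega)
      _ ≤ ((s:ℝ) - 1) * ((h:ℝ) * ((n:ℝ) / (θ + n) ^ 2)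
          + ((n:ℝ) - h) * (((n:ℝ) + h) / (θ + n + h) ^ 2)) :=
          mul_le_mul_of_nonneg_left hE3 (by linarith)
  have hfinal : ((s:ℝ) - 1) * ((h:ℝ) * ((n:ℝ) / (θ + n) ^ 2)
      + ((n:ℝ) - h) * (((n:ℝ) + h) / (θ + n + h) ^ 2)) < ((s:ℝ) - 1) * ellFn n θ :=
    mul_lt_mul_of_pos_left hRL (by linarith)
  have hlast : ellFn n θ + ((s:ℝ) - 1) * ellFn n θ = (s:ℝ) * ellFn n θ := by ring
  rw [hE1]
  linarith
end

section
/- Let 0 < θ < 2 be real, s ≥ 2 an integer, and n an integer with n > 1 + (θ+1)^2(1/s + 1). Then s·ℓ_n(θ) > ℓ_{ns}(θ). -/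
open MeasureTheory ProbabilityTheory Finset

noncomputable def tt (θ : ℝ) (i : ℕ) : ℝ := ((i : ℝ) - 1) / (θ + i - 1) ^ 2

lemma ellFn_eq (m : ℕ) (θ : ℝ) : ellFn m θ = ∑ i ∈ Finset.Ioc 0 m, tt θ i := by
  rw [ellFn, ← Finset.Icc_add_one_left_eq_Ioc]
  rfl

lemma tt_mono (θ : ℝ) (hθ0 : 0 < θ) (hθ : θ < 2) (a b : ℕ) (ha : 3 ≤ a) (hab : a ≤ b) :
    tt θ b ≤ tt θ a := by
  have hA : (3:ℝ) ≤ (a:ℝ) := by exact_mod_cast ha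
  have hAB : (a:ℝ) ≤ (b:ℝ) := by exact_mod_cast hab
  have hda : (0:ℝ) < θ + a - 1 := by linarith
  have hdb : (0:ℝ) < θ + b - 1 := by linarith
  rw [tt, tt, div_le_div_iff₀ (pow_pos hdb 2) (pow_pos hda 2)]
  nlinarith [mul_nonneg (sub_nonneg.2 hAB)
    (sub_nonneg.2 (show θ^2 ≤ ((a:ℝ)-1)*((b:ℝ)-1) by nlinarith))]

lemma numeric (θ N K : ℝ) (hθ0 : 0 < θ) (hθ : θ < 2) (hN : 1 + (θ+1)^2 < N) (hK : N ≤ K) :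
    K/(θ+K)^2 + (K+1)/(θ+K+1)^2 + (K+N-1)/(θ+K+N-1)^2 < 1/(θ+1)^2 + 2/(θ+2)^2 := by
  set u := θ + 1 with hu
  have hu1 : 1 < u := by simp [hu]; linarith
  have hN2 : 2 < N := by nlinarith
  have hK2 : 2 < K := by linarith
  have ha : u + u^2 < θ + K := by nlinarith
  have hb : u + 2*u^2 < θ + K + N - 1 := by nlinarith
  have hpa : (0:ℝ) < θ + K := by nlinarith
  have hpa1 : (0:ℝ) < θ + K + 1 := by linarith
  have hpb : (0:ℝ) < θ + K + N - 1 := by nlinarith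
  have hua : (0:ℝ) < u + u^2 := by nlinarith
  have hub : (0:ℝ) < u + 2*u^2 := by nlinarith
  have e1 : K/(θ+K)^2 < 1/(u + u^2) := by
    rw [div_lt_div_iff₀ (by positivity) hua]
    nlinarith
  have e2 : (K+1)/(θ+K+1)^2 < 1/(u + u^2) := by
    rw [div_lt_div_iff₀ (by positivity) hua]
    nlinarith
  have e3 : (K+N-1)/(θ+K+N-1)^2 < 1/(u + 2*u^2) := by
    rw [div_lt_div_iff₀ (by positivity) hub]
    nlinarith
  have final : 2/(u + u^2) + 1/(u + 2*u^2) ≤ 1/u^2 + 2/(u+1)^2 := by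
    have hId : 1/u^2 + 2/(u+1)^2 - (2/(u + u^2) + 1/(u + 2*u^2))
        = (u^3 - u^2 + u + 1)/(u^2*(u+1)^2*(2*u+1)) := by
      have h1 : u ≠ 0 := by linarith
      have h2 : u + 1 ≠ 0 := by linarith
      have h3 : u + u^2 ≠ 0 := by linarith
      have h4 : u + 2*u^2 ≠ 0 := by linarith
      have h5 : 2*u + 1 ≠ 0 := by linarith
      field_simp
      ring
    have hnum : 0 ≤ (u^3 - u^2 + u + 1)/(u^2*(u+1)^2*(2*u+1)) := by
      apply div_nonneg (by nlinarith) (by positivity)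
    linarith
  have hgoal2 : 2/(u+1)^2 = 2/(θ+2)^2 := by rw [hu]; ring_nf
  have h22 : 2/(u + u^2) = 1/(u + u^2) + 1/(u + u^2) := by ring
  linarith [e1, e2, e3]

lemma block_lt (θ : ℝ) (hθ0 : 0 < θ) (hθ : θ < 2) (n k : ℕ) (hn3 : 3 ≤ n) (hk : 1 ≤ k)
    (hnθ : 1 + (θ + 1) ^ 2 < (n : ℝ)) :
    ∑ j ∈ Finset.Ioc 0 n, tt θ (n * k + j) < ∑ j ∈ Finset.Ioc 0 n, tt θ j := by
  obtain ⟨m, rfl⟩ : ∃ m, n = m + 3 := ⟨n - 3, by omega⟩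
  set K : ℕ := (m + 3) * k with hKdef
  have hKge : m + 3 ≤ K := by
    calc m + 3 = (m+3) * 1 := by ring
    _ ≤ (m+3) * k := Nat.mul_le_mul_left _ hk
  have hsplitL : ∀ f : ℕ → ℝ, ∑ j ∈ Finset.Ioc 0 (m+3), f j
      = f 1 + f 2 + (∑ j ∈ Finset.Ioc 2 (m+2), f j) + f (m+3) := by
    intro f
    rw [← Finset.sum_Ioc_consecutive f (Nat.zero_le (m+2)) (by omega : m+2 ≤ m+3),
        ← Finset.sum_Ioc_consecutive f (Nat.zero_le 2) (by omega : 2 ≤ m+2)]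
    have h1 : Finset.Ioc 0 2 = {1, 2} := by decide
    have h2 : Finset.Ioc (m+2) (m+3) = {m+3} := by
      ext x; simp [Finset.mem_Ioc]
    rw [h1, h2]
    simp
  have hre : ∑ j ∈ Finset.Ioc 2 (m+2), tt θ (1 + j) = ∑ j ∈ Finset.Ioc 3 (m+3), tt θ j := by
    rw [show Finset.Ioc 3 (m+3) = Finset.Ioc (1+2) (1+(m+2)) by rw [show 1+(m+2) = m+3 from by omega],
        ← Finset.map_add_left_Ioc, Finset.sum_map]
    rfl
  have hsplitR : ∑ j ∈ Finset.Ioc 0 (m+3), tt θ j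
      = tt θ 1 + tt θ 2 + tt θ 3 + ∑ j ∈ Finset.Ioc 2 (m+2), tt θ (1 + j) := by
    rw [hre, ← Finset.sum_Ioc_consecutive (tt θ) (Nat.zero_le 3) (by omega : 3 ≤ m+3)]
    have h1 : Finset.Ioc 0 3 = {1, 2, 3} := by decide
    rw [h1]
    simp
    ring
  rw [hsplitL (fun j => tt θ (K + j)), hsplitR]
  have hmid : ∑ j ∈ Finset.Ioc 2 (m+2), tt θ (K + j) ≤ ∑ j ∈ Finset.Ioc 2 (m+2), tt θ (1 + j) := by
    apply Finset.sum_le_sum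
    intro j hj
    simp [Finset.mem_Ioc] at hj
    exact tt_mono θ hθ0 hθ (1+j) (K+j) (by omega) (by omega)
  have ht1 : tt θ 1 = 0 := by simp [tt]
  have hnum : tt θ (K + 1) + tt θ (K + 2) + tt θ (K + (m+3)) < tt θ 2 + tt θ 3 := by
    have hcast : (1:ℝ) + (θ+1)^2 < ((m:ℝ)+3) := by
      have : ((m+3 : ℕ) : ℝ) = (m:ℝ)+3 := by push_cast; ring
      linarith [this ▸ hnθ]
    have hKcast : ((m:ℝ)+3) ≤ (K:ℝ) := by
      have : ((m+3 : ℕ) : ℝ) ≤ (K:ℝ) := by exact_mod_cast hKge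
      push_cast at this; linarith
    have := numeric θ ((m:ℝ)+3) (K:ℝ) hθ0 hθ hcast hKcast
    have e2' : tt θ 2 = 1/(θ+1)^2 := by
      rw [tt]; push_cast; rw [show θ+2-1 = θ+1 from by ring]; norm_num
    have e3' : tt θ 3 = 2/(θ+2)^2 := by
      rw [tt]; push_cast; rw [show θ+3-1 = θ+2 from by ring]; norm_num
    have f1 : tt θ (K+1) = (K:ℝ)/(θ+(K:ℝ))^2 := by
      simp only [tt]; push_cast; ring_nf
    have f2 : tt θ (K+2) = ((K:ℝ)+1)/(θ+(K:ℝ)+1)^2 := by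
      simp only [tt]; push_cast; ring_nf
    have f3 : tt θ (K+(m+3)) = ((K:ℝ)+((m:ℝ)+3)-1)/(θ+(K:ℝ)+((m:ℝ)+3)-1)^2 := by
      simp only [tt]; push_cast; ring_nf
    rw [e2', e3', f1, f2, f3]
    convert this using 3 <;> ring
  linarith

lemma step (θ : ℝ) (hθ0 : 0 < θ) (hθ : θ < 2) (n : ℕ) (hn3 : 3 ≤ n)
    (hnθ : 1 + (θ + 1) ^ 2 < (n : ℝ)) (k : ℕ) (hk : 1 ≤ k) :
    ellFn (n * (k+1)) θ < ellFn (n * k) θ + ellFn n θ := by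
  rw [ellFn_eq, ellFn_eq, ellFn_eq]
  have hsplit : (∑ i ∈ Finset.Ioc 0 (n*k), tt θ i) + (∑ i ∈ Finset.Ioc (n*k) (n*(k+1)), tt θ i)
      = ∑ i ∈ Finset.Ioc 0 (n*(k+1)), tt θ i :=
    Finset.sum_Ioc_consecutive _ (Nat.zero_le _) (Nat.mul_le_mul_left _ (by omega))
  rw [← hsplit]
  have hre : ∑ i ∈ Finset.Ioc (n*k) (n*(k+1)), tt θ i = ∑ j ∈ Finset.Ioc 0 n, tt θ (n*k + j) := by
    rw [show n*(k+1) = n*k + n from by ring, show Finset.Ioc (n*k) (n*k+n) = Finset.Ioc (n*k+0) (n*k+n) from by rw [Nat.add_zero],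
        ← Finset.map_add_left_Ioc, Finset.sum_map]
    rfl
  rw [hre]
  linarith [block_lt θ hθ0 hθ n k hn3 hk hnθ]

theorem th0_part2 (θ : ℝ) (hθ0 : 0 < θ) (hθ : θ < 2) (s n : ℕ) (hs : 2 ≤ s)
    (hn : (n : ℝ) > 1 + (θ + 1) ^ 2 * (1 / s + 1)) :
    s * ellFn n θ > ellFn (n * s) θ := by
  have hs0 : (0:ℝ) < (s:ℝ) := by positivity
  have h1s : (0:ℝ) < 1/(s:ℝ) := by positivity
  have hsq : (1:ℝ) < (θ+1)^2 := by nlinarith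
  have hnθ : 1 + (θ + 1) ^ 2 < (n : ℝ) := by nlinarith
  have hn3 : 3 ≤ n := by
    have h2 : (2:ℝ) < (n:ℝ) := by nlinarith
    exact_mod_cast (by exact_mod_cast h2 : 2 < n)
  have key : ∀ m : ℕ, 1 ≤ m → ellFn (n * (m+1)) θ < ((m:ℝ)+1) * ellFn n θ := by
    intro m hm
    induction m with
    | zero => omega
    | succ p ih =>
      rcases Nat.eq_zero_or_pos p with hp | hp
      · subst hp
        have := step θ hθ0 hθ n hn3 hnθ 1 le_rfl
        rw [Nat.mul_one] at this
        push_cast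
        linarith
      · have h1 := step θ hθ0 hθ n hn3 hnθ (p+1) (by omega)
        have h2 := ih hp
        push_cast at h2 ⊢
        linarith
  obtain ⟨m, rfl⟩ : ∃ m, s = m + 1 := ⟨s - 1, by omega⟩
  have := key m (by omega)
  push_cast
  push_cast at this
  linarith
end

section
/- If 0 < θ ≤ 1, then for all integers n ≥ 8 and s ≥ 2, s·ℓ_n(θ) > ℓ_{ns}(θ). -/
open MeasureTheory ProbabilityTheory Finset

theorem cor_small_theta (θ : ℝ) (hθ0 : 0 < θ) (hθ : θ ≤ 1) (n s : ℕ) (hn : 8 ≤ n) (hs : 2 ≤ s) :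
    s * ellFn n θ > ellFn (n * s) θ := by
  have hns : n ≤ n * s := Nat.le_mul_of_pos_right n (by omega)
  -- split ellFn (n*s) = ellFn n + tail
  have hsplit : ellFn (n * s) θ = ellFn n θ +
      ∑ i ∈ Finset.Ioc n (n * s), ((i : ℝ) - 1) / (θ + i - 1) ^ 2 := by
    unfold ellFn
    rw [show Finset.Icc 1 (n*s) = Finset.Ioc 0 (n*s) by rfl,
        show Finset.Icc 1 n = Finset.Ioc 0 n by rfl,
        ← Finset.sum_Ioc_consecutive _ (Nat.zero_le n) hns]
  set T := ∑ i ∈ Finset.Ioc n (n * s), ((i : ℝ) - 1) / (θ + i - 1) ^ 2 with hT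
  -- tail bound: each term ≤ 1/n
  have htail : T ≤ (s : ℝ) - 1 := by
    have h1 : T ≤ ∑ i ∈ Finset.Ioc n (n * s), (1 / n : ℝ) := by
      apply Finset.sum_le_sum
      intro i hi
      have hi' : n < i := (Finset.mem_Ioc.mp hi).1
      have hin : (n : ℝ) ≤ (i : ℝ) - 1 := by
        have : (n : ℝ) + 1 ≤ i := by exact_mod_cast hi'
        linarith
      have hn8 : (8 : ℝ) ≤ n := by exact_mod_cast hn
      have hx : (0 : ℝ) < (i : ℝ) - 1 := by linarith
      have hy : (i : ℝ) - 1 ≤ θ + i - 1 := by linarith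
      have hy0 : (0 : ℝ) < θ + i - 1 := by linarith
      calc ((i : ℝ) - 1) / (θ + i - 1) ^ 2 ≤ ((i : ℝ) - 1) / ((i : ℝ) - 1) ^ 2 := by
            apply div_le_div_of_nonneg_left (by linarith) (by positivity)
            nlinarith [sq_nonneg ((i:ℝ)-1)]
        _ = 1 / ((i : ℝ) - 1) := by rw [sq]; field_simp
        _ ≤ 1 / (n : ℝ) := by
            apply one_div_le_one_div_of_le (by linarith) hin
    have hcard : (Finset.Ioc n (n * s)).card = n * s - n := by
      simp [Nat.card_Ioc]
    rw [Finset.sum_const, hcard, nsmul_eq_mul] at h1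
    have hnpos : (0 : ℝ) < n := by positivity
    have hc : ((n * s - n : ℕ) : ℝ) = (n : ℝ) * s - n := by
      push_cast [Nat.cast_sub hns]; ring
    rw [hc] at h1
    calc T ≤ ((n : ℝ) * s - n) * ((1 : ℝ) / n) := h1
      _ = (s : ℝ) - 1 := by field_simp
  -- lower bound: ellFn n θ > 1
  have hlow : 1 < ellFn n θ := by
    have h8 : ellFn 8 θ ≤ ellFn n θ := by
      unfold ellFn
      apply Finset.sum_le_sum_of_subset_of_nonneg
      · exact Finset.Icc_subset_Icc_right hn
      · intro i hi _
        have hi1 : 1 ≤ i := (Finset.mem_Icc.mp hi).1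
        have : (1 : ℝ) ≤ i := by exact_mod_cast hi1
        have hy0 : (0 : ℝ) < θ + i - 1 := by linarith
        apply div_nonneg (by linarith) (by positivity)
    have h8' : (1 : ℝ) < ellFn 8 θ := by
      have key : ∑ i ∈ Finset.Icc (1:ℕ) 8, ((i : ℝ) - 1) / (i : ℝ) ^ 2 ≤ ellFn 8 θ := by
        unfold ellFn
        apply Finset.sum_le_sum
        intro i hi
        have hi1 : 1 ≤ i := (Finset.mem_Icc.mp hi).1
        have h1i : (1 : ℝ) ≤ i := by exact_mod_cast hi1
        have hy0 : (0 : ℝ) < θ + i - 1 := by linarith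
        rcases eq_or_lt_of_le h1i with h | h
        · rw [← h]; norm_num
        · apply div_le_div_of_nonneg_left (by linarith) (by positivity)
          nlinarith
      have hval : (1 : ℝ) < ∑ i ∈ Finset.Icc (1:ℕ) 8, ((i : ℝ) - 1) / (i : ℝ) ^ 2 := by
        rw [show Finset.Icc (1:ℕ) 8 = ({1,2,3,4,5,6,7,8} : Finset ℕ) by rfl]
        norm_num
      linarith
    linarith
  have hs' : (2 : ℝ) ≤ s := by exact_mod_cast hs
  rw [hsplit]
  nlinarith [hlow, htail, hs']
end

section
/- Let n ≥ 2 and s ≥ 2 be integers and θ real with 1 ≤ θ ≤ (s/log(1+ns))^{1/2} − 1. Then s·ℓ_n(θ) > ℓ_{ns}(θ). -/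
open MeasureTheory ProbabilityTheory Finset

lemma sum_inv_le_log (m : ℕ) : ∑ i ∈ Finset.Icc 2 m, (1 : ℝ) / i ≤ Real.log m := by
  induction m with
  | zero => simp
  | succ k ih =>
    rcases Nat.lt_or_ge k 1 with hk | hk
    · interval_cases k <;> simp
    · have h2 : 2 ≤ k + 1 := by omega
      have hins : Finset.Icc 2 (k + 1) = insert (k + 1) (Finset.Icc 2 k) := by
        ext x; simp [Finset.mem_Icc]; omega
      rw [hins, Finset.sum_insert (by simp)]
      have hkpos : (0 : ℝ) < k := by exact_mod_cast hk
      have hk1pos : (0 : ℝ) < (k : ℝ) + 1 := by linarith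
      have hlog : Real.log ((k : ℝ) / (k + 1)) ≤ (k : ℝ) / (k + 1) - 1 :=
        Real.log_le_sub_one_of_pos (by positivity)
      rw [Real.log_div (ne_of_gt hkpos) (ne_of_gt hk1pos)] at hlog
      have heq : (k : ℝ) / (k + 1) - 1 = -(1 / (k + 1)) := by
        field_simp
        ring
      rw [heq] at hlog
      push_cast
      linarith

theorem thn (n s : ℕ) (hn : 2 ≤ n) (hs : 2 ≤ s) (θ : ℝ)
    (hθ1 : 1 ≤ θ) (hθ2 : θ ≤ Real.sqrt (s / Real.log (1 + n * s)) - 1) :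
    s * ellFn n θ > ellFn (n * s) θ := by
  have hns : 4 ≤ n * s := le_trans (by norm_num) (Nat.mul_le_mul hn hs)
  have hnsR : (4 : ℝ) ≤ (n : ℝ) * s := by exact_mod_cast hns
  have hθ0 : (0 : ℝ) < θ := lt_of_lt_of_le one_pos hθ1
  -- upper bound
  have hub : ellFn (n * s) θ ≤ Real.log (n * s) := by
    have h1 : ellFn (n * s) θ ≤ ∑ i ∈ Finset.Icc 2 (n * s), (1 : ℝ) / i := by
      unfold ellFn
      have hins : Finset.Icc 1 (n * s) = insert 1 (Finset.Icc 2 (n * s)) := by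
        ext x; simp [Finset.mem_Icc]; omega
      rw [hins, Finset.sum_insert (by simp)]
      have h0 : ((1 : ℕ) : ℝ) - 1 = 0 := by norm_num
      rw [h0, zero_div, zero_add]
      apply Finset.sum_le_sum
      intro i hi
      simp only [Finset.mem_Icc] at hi
      have hi2 : (2 : ℝ) ≤ (i : ℝ) := by exact_mod_cast hi.1
      have hden : (i : ℝ) ≤ θ + i - 1 := by linarith
      have hdenpos : (0 : ℝ) < θ + i - 1 := by linarith
      rw [div_le_div_iff₀ (by positivity) (by linarith)]
      nlinarith
    calc ellFn (n * s) θ ≤ ∑ i ∈ Finset.Icc 2 (n * s), (1 : ℝ) / i := h1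
      _ ≤ Real.log ((n * s : ℕ) : ℝ) := sum_inv_le_log (n * s)
      _ = Real.log ((n : ℝ) * s) := by push_cast; ring_nf
  have hlogns : Real.log (n * s) < Real.log (1 + n * s) := by
    apply Real.log_lt_log (by linarith) (by linarith)
  have hlogpos : 0 < Real.log (1 + (n : ℝ) * s) := by
    apply Real.log_pos; linarith
  -- from hθ2 : (θ+1)^2 ≤ s / log(1+ns)
  have hfrac : (0 : ℝ) ≤ (s : ℝ) / Real.log (1 + n * s) := by positivity
  have hsq : (θ + 1) ^ 2 ≤ (s : ℝ) / Real.log (1 + n * s) := by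
    have h := pow_le_pow_left₀ (by linarith) (by linarith : θ + 1 ≤ Real.sqrt ((s : ℝ) / Real.log (1 + n * s))) 2
    rwa [Real.sq_sqrt hfrac] at h
  have hkey : Real.log (1 + (n : ℝ) * s) ≤ (s : ℝ) / (θ + 1) ^ 2 := by
    rw [le_div_iff₀ (by positivity)]
    have := (le_div_iff₀ hlogpos).mp hsq
    linarith
  -- lower bound: ellFn n θ ≥ 1/(θ+1)^2
  have hlb : 1 / (θ + 1) ^ 2 ≤ ellFn n θ := by
    unfold ellFn
    have h2mem : 2 ∈ Finset.Icc 1 n := by simp; omega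
    have := Finset.single_le_sum (f := fun i : ℕ => ((i : ℝ) - 1) / (θ + i - 1) ^ 2)
      (fun i hi => by
        simp only [Finset.mem_Icc] at hi
        have h1i : (1 : ℝ) ≤ (i : ℝ) := by exact_mod_cast hi.1
        have hd : (0 : ℝ) < θ + i - 1 := by linarith
        exact div_nonneg (by linarith) (by positivity)) h2mem
    calc 1 / (θ + 1) ^ 2 = (((2 : ℕ) : ℝ) - 1) / (θ + (2 : ℕ) - 1) ^ 2 := by norm_num; ring_nf
      _ ≤ _ := this
  have hspos : (0 : ℝ) < s := by exact_mod_cast (by omega : 0 < s)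
  have : (s : ℝ) / (θ + 1) ^ 2 = s * (1 / (θ + 1) ^ 2) := by ring
  have hfinal : (s : ℝ) / (θ + 1) ^ 2 ≤ s * ellFn n θ := by
    rw [this]
    exact mul_le_mul_of_nonneg_left hlb (le_of_lt hspos)
  calc ellFn (n * s) θ ≤ Real.log ((n : ℝ) * s) := hub
    _ < Real.log (1 + (n : ℝ) * s) := hlogns
    _ ≤ (s : ℝ) / (θ + 1) ^ 2 := hkey
    _ ≤ s * ellFn n θ := hfinal
end

section
/- Let n ≥ 1 and s ≥ 2 be integers and θ real with θ > √((n−1)(ns+n−1)). Then s·ℓ_n(θ) < ℓ_{ns}(θ). -/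
open MeasureTheory ProbabilityTheory Finset

lemma key_mono (θ x y : ℝ) (hx : 0 ≤ x) (hxy : x < y) (hθ : 0 < θ)
    (h : x * y < θ ^ 2) : x / (θ + x) ^ 2 < y / (θ + y) ^ 2 := by
  have h1 : (0:ℝ) < (θ + x) ^ 2 := pow_pos (by linarith) 2
  have h2 : (0:ℝ) < (θ + y) ^ 2 := pow_pos (by linarith) 2
  rw [div_lt_div_iff₀ h1 h2]
  nlinarith [sq_nonneg (x - y)]

lemma ell_eq (m : ℕ) (θ : ℝ) :
    ellFn m θ = ∑ k ∈ Finset.range m, (k : ℝ) / (θ + k) ^ 2 := by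
  unfold ellFn
  rw [show Finset.Icc 1 m = Finset.Ico 1 (m + 1) by rfl,
    Finset.sum_Ico_eq_sum_range]
  simp only [Nat.add_sub_cancel]
  apply Finset.sum_congr rfl
  intro k _
  push_cast
  ring_nf

lemma sum_blocks (m s : ℕ) (g : ℕ → ℝ) :
    ∑ k ∈ Finset.range (m * s), g k
      = ∑ j ∈ Finset.range s, ∑ i ∈ Finset.range m, g (j * m + i) := by
  induction s with
  | zero => simp
  | succ s ih =>
      rw [Nat.mul_succ, Finset.sum_range_add, ih, Finset.sum_range_succ]
      congr 1
      exact Finset.sum_congr rfl fun i _ => by rw [Nat.mul_comm]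

theorem th1 (n s : ℕ) (hn : 1 ≤ n) (hs : 2 ≤ s) (θ : ℝ)
    (hθ : θ > Real.sqrt (((n : ℝ) - 1) * ((n : ℝ) * s + n - 1))) :
    s * ellFn n θ < ellFn (n * s) θ := by
  set c : ℝ := ((n : ℝ) - 1) * ((n : ℝ) * s + n - 1) with hc
  have hn1 : (1:ℝ) ≤ (n:ℝ) := by exact_mod_cast hn
  have hs2 : (2:ℝ) ≤ (s:ℝ) := by exact_mod_cast hs
  have hc0 : 0 ≤ c := by
    apply mul_nonneg <;> nlinarith
  have hθ0 : 0 < θ := lt_of_le_of_lt (Real.sqrt_nonneg c) hθ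
  have hθ2 : c < θ ^ 2 := by
    nlinarith [Real.sq_sqrt hc0, Real.sqrt_nonneg c]
  rw [ell_eq, ell_eq, sum_blocks]
  have hL : (s : ℝ) * ∑ k ∈ Finset.range n, (k : ℝ) / (θ + k) ^ 2
      = ∑ j ∈ Finset.range s, ∑ k ∈ Finset.range n, (k : ℝ) / (θ + k) ^ 2 := by
    simp [Finset.sum_const, Finset.card_range, nsmul_eq_mul]
  rw [hL]
  -- key pointwise strict inequality for j ≥ 1
  have hkey : ∀ j ∈ Finset.range s, 1 ≤ j → ∀ i ∈ Finset.range n,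
      (i : ℝ) / (θ + i) ^ 2 < ((j * n + i : ℕ) : ℝ) / (θ + (j * n + i : ℕ)) ^ 2 := by
    intro j hj hj1 i hi
    have hjs : j + 1 ≤ s := Finset.mem_range.mp hj
    have hin : i + 1 ≤ n := Finset.mem_range.mp hi
    have hjR : (j : ℝ) + 1 ≤ (s : ℝ) := by exact_mod_cast hjs
    have hiR : (i : ℝ) + 1 ≤ (n : ℝ) := by exact_mod_cast hin
    have hj1R : (1:ℝ) ≤ (j:ℝ) := by exact_mod_cast hj1
    push_cast
    apply key_mono θ _ _ (by positivity) (by nlinarith) hθ0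
    -- i * (j*n + i) < θ^2
    have hy : (j:ℝ) * n + i ≤ (n:ℝ) * s - 1 := by nlinarith
    have hprod : (i:ℝ) * ((j:ℝ) * n + i) ≤ c := by
      rw [hc]
      nlinarith [mul_nonneg (by linarith : (0:ℝ) ≤ (n:ℝ) - 1 - i)
          (by positivity : (0:ℝ) ≤ (j:ℝ) * n + i),
        mul_nonneg (by linarith : (0:ℝ) ≤ (n:ℝ) - 1)
          (by linarith : (0:ℝ) ≤ (n:ℝ) * s + n - 1 - ((j:ℝ) * n + i))]
    linarith
  apply Finset.sum_lt_sum
  · intro j hj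
    rcases Nat.eq_zero_or_pos j with h0 | h1
    · subst h0; simp
    · apply Finset.sum_le_sum
      intro i hi
      exact le_of_lt (hkey j hj h1 i hi)
  · refine ⟨1, Finset.mem_range.mpr (by omega), ?_⟩
    apply Finset.sum_lt_sum_of_nonempty
    · exact Finset.nonempty_range_iff.mpr (by omega)
    · intro i hi
      exact hkey 1 (Finset.mem_range.mpr (by omega)) le_rfl i hi
end

section
/- For real θ > 0 and positive integer n, L_n(θ) = Σ_{i=1}^n 1/(θ+i-1) < log(1 + n/θ) + n/(θ(θ+n)). -/
open MeasureTheory ProbabilityTheory Finset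

lemma key_log (x : ℝ) (hx : 0 < x) : 1 / (x + 1) < Real.log (x + 1) - Real.log x := by
  have hx1 : (0:ℝ) < x + 1 := by linarith
  have hne : x / (x + 1) ≠ 1 := by
    intro h
    field_simp at h
    linarith
  have h := Real.log_lt_sub_one_of_pos (div_pos hx hx1) hne
  rw [Real.log_div (ne_of_gt hx) (ne_of_gt hx1)] at h
  have : x / (x + 1) - 1 = -(1 / (x + 1)) := by field_simp; ring
  rw [this] at h
  linarith

lemma L_lt_aux (θ : ℝ) (hθ : 0 < θ) (n : ℕ) (hn : 1 ≤ n) :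
    Lfn n θ < Real.log (θ + n) - Real.log θ + (1 / θ - 1 / (θ + n)) := by
  induction n, hn using Nat.le_induction with
  | base =>
    have h := key_log θ hθ
    simp only [Lfn, Nat.cast_one]
    rw [Finset.Icc_self, Finset.sum_singleton]
    push_cast
    have : θ + 1 - 1 = θ := by ring
    rw [this]
    linarith
  | succ m hm ih =>
    have hA : (0:ℝ) < θ + m := by positivity
    have h := key_log (θ + m) hA
    have hs : Lfn (m + 1) θ = Lfn m θ + 1 / (θ + m) := by
      simp only [Lfn]
      rw [Finset.sum_Icc_succ_top (by omega : 1 ≤ m + 1)]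
      push_cast
      have : θ + ((m:ℝ) + 1) - 1 = θ + m := by ring
      rw [this]
    rw [hs]
    push_cast
    have he : θ + ((m:ℝ) + 1) = θ + m + 1 := by ring
    rw [he]
    linarith
theorem L_lt (θ : ℝ) (hθ : 0 < θ) (n : ℕ) (hn : 1 ≤ n) :
    Lfn n θ < Real.log (1 + n / θ) + n / (θ * (θ + n)) := by
  have hθn : (0:ℝ) < θ + n := by positivity
  have h1 : (1 : ℝ) + n / θ = (θ + n) / θ := by field_simp
  have h2 : (n : ℝ) / (θ * (θ + n)) = 1 / θ - 1 / (θ + n) := by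
    field_simp
    ring
  rw [h1, Real.log_div (ne_of_gt hθn) (ne_of_gt hθ), h2]
  exact L_lt_aux θ hθ n hn
end

section
/- For real θ > 0 and positive integer n, ℓ_n(θ) < log(1 + n/θ) + (1/θ − 1)·n/(θ+n). In particular, if θ ≥ 1 then ℓ_n(θ) < log(1 + n/θ). -/
open MeasureTheory ProbabilityTheory Finset

lemma log_gt (x : ℝ) (hx : 0 < x) : 1 / (x + 1) < Real.log ((x + 1) / x) := by
  have hx1 : 0 < x + 1 := by linarith
  have h1 : Real.log (x / (x + 1)) < -(1 / (x + 1)) := by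
    rw [Real.log_lt_iff_lt_exp (by positivity)]
    have hne : -(1 / (x + 1)) ≠ 0 := by
      have : (0:ℝ) < 1/(x+1) := by positivity
      intro h; rw [neg_eq_zero] at h; linarith
    have := Real.add_one_lt_exp hne
    have heq : -(1 / (x + 1)) + 1 = x / (x + 1) := by field_simp; ring
    linarith
  have h2 : Real.log (x / (x + 1)) = -Real.log ((x + 1) / x) := by
    rw [Real.log_div (by positivity) (by positivity), Real.log_div (by positivity) (by positivity)]
    ring
  linarith [h2 ▸ h1]

lemma key (θ x : ℝ) (hθ : 0 < θ) (hx : θ ≤ x) :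
    (x - θ) / x ^ 2 < Real.log ((x + 1) / x) + (1 - θ) / (x * (x + 1)) := by
  have hx0 : 0 < x := lt_of_lt_of_le hθ hx
  have hlog := log_gt x hx0
  have h1 : (x - θ) / x ^ 2 ≤ (x + 1 - θ) / (x * (x + 1)) := by
    rw [div_le_div_iff₀ (by positivity) (by positivity)]
    nlinarith
  have h2 : (x + 1 - θ) / (x * (x + 1)) = 1 / (x + 1) + (1 - θ) / (x * (x + 1)) := by
    field_simp
    ring
  linarith [h2 ▸ h1]

theorem ell_lt (θ : ℝ) (hθ : 0 < θ) (n : ℕ) (hn : 1 ≤ n) :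
    ellFn n θ < Real.log (1 + n / θ) + (1 / θ - 1) * (n / (θ + n)) ∧
    (1 ≤ θ → ellFn n θ < Real.log (1 + n / θ)) := by
  have main : ellFn n θ < Real.log (1 + n / θ) + (1 / θ - 1) * (n / (θ + n)) := by
    induction n, hn using Nat.le_induction with
    | base =>
      have hk := key θ θ hθ le_rfl
      have e1 : ellFn 1 θ = 0 := by simp [ellFn]
      have e2 : Real.log (1 + ((1:ℕ):ℝ) / θ) = Real.log ((θ + 1) / θ) := by
        rw [show (1:ℝ) + ((1:ℕ):ℝ) / θ = (θ + 1) / θ by push_cast; field_simp]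
      have e3 : (1 / θ - 1) * (((1:ℕ):ℝ) / (θ + ((1:ℕ):ℝ))) = (1 - θ) / (θ * (θ + 1)) := by
        push_cast
        field_simp
      rw [e1, e2, e3]
      have h0 : (θ - θ) / θ ^ 2 = 0 := by simp
      linarith [h0 ▸ hk]
    | succ m hm ih =>
      have hm0 : (0:ℝ) ≤ m := Nat.cast_nonneg m
      have hx0 : 0 < θ + m := by linarith
      have hx1 : 0 < θ + m + 1 := by linarith
      have hk' := key θ (θ + m) hθ (by linarith)
      rw [show θ + (m:ℝ) - θ = (m:ℝ) by ring] at hk'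
      push_cast
      have esum : ellFn (m + 1) θ = ellFn m θ + (m:ℝ) / (θ + m) ^ 2 := by
        simp only [ellFn, Finset.sum_Icc_succ_top (by omega : 1 ≤ m + 1)]
        push_cast
        congr 1
        ring
      have l1 : Real.log (1 + (m:ℝ) / θ) = Real.log (θ + m) - Real.log θ := by
        rw [show (1:ℝ) + m / θ = (θ + m) / θ by field_simp,
          Real.log_div (by positivity) (by positivity)]
      have l2 : Real.log (1 + ((m:ℝ) + 1) / θ) = Real.log (θ + m + 1) - Real.log θ := by
        rw [show (1:ℝ) + ((m:ℝ) + 1) / θ = (θ + m + 1) / θ by field_simp; ring,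
          Real.log_div (by positivity) (by positivity)]
      have l3 : Real.log ((θ + m + 1) / (θ + m)) = Real.log (θ + m + 1) - Real.log (θ + m) :=
        Real.log_div (by positivity) (by positivity)
      have r : (1 / θ - 1) * (((m:ℝ) + 1) / (θ + ((m:ℝ) + 1)))
          = (1 / θ - 1) * ((m:ℝ) / (θ + m)) + (1 - θ) / ((θ + m) * (θ + m + 1)) := by
        field_simp
        ring
      rw [esum, l2, r]
      rw [l1] at ih
      rw [l3] at hk'
      linarith
  refine ⟨main, fun h1 => ?_⟩
  have hpos : (0:ℝ) ≤ (n:ℝ) / (θ + n) := by positivity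
  have hneg : 1 / θ - 1 ≤ 0 := by
    have : 1 / θ ≤ 1 := by rw [div_le_one hθ]; exact h1
    linarith
  nlinarith [mul_nonpos_of_nonpos_of_nonneg hneg hpos]
end

section
/- For positive integers a ≤ b and real θ > 0, Σ_{i=a}^b i/(i+θ)^2 < log((b+θ)/(a−1+θ)) − θ(b−a+1)/((a+θ)(b+1+θ)). -/
open MeasureTheory ProbabilityTheory Finset

lemma tele1 (F : ℕ → ℝ) (a : ℕ) : ∀ b, a ≤ b →
    ∑ i ∈ Finset.Icc a b, (F i - F (i - 1)) = F b - F (a - 1) := by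
  intro b hb
  induction b, hb using Nat.le_induction with
  | base => simp
  | succ n hn ih =>
      rw [Finset.sum_Icc_succ_top (by omega), ih, Nat.add_sub_cancel]
      ring

lemma tele2 (G : ℕ → ℝ) (a : ℕ) : ∀ b, a ≤ b →
    ∑ i ∈ Finset.Icc a b, (G i - G (i + 1)) = G a - G (b + 1) := by
  intro b hb
  induction b, hb using Nat.le_induction with
  | base => simp
  | succ n hn ih =>
      rw [Finset.sum_Icc_succ_top (by omega), ih]
      ring

lemma term_lt (θ t : ℝ) (hθ : 0 < θ) (ht : 1 ≤ t) :
    t / (t + θ) ^ 2 <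
      (Real.log (θ + t) - Real.log (θ + t - 1)) - θ * (1 / (t + θ) - 1 / (t + 1 + θ)) := by
  have hy1 : 1 < t + θ := by linarith
  have hy0 : 0 < t + θ := by linarith
  rw [show θ + t = t + θ by ring, show t + 1 + θ = t + θ + 1 by ring]
  have h1 : Real.log ((t + θ - 1) / (t + θ)) < (t + θ - 1) / (t + θ) - 1 := by
    apply Real.log_lt_sub_one_of_pos
    · apply div_pos (by linarith) hy0
    · intro h
      rw [div_eq_one_iff_eq (by positivity)] at h
      linarith
  rw [Real.log_div (by linarith) (by positivity)] at h1
  have h2 : (t + θ - 1) / (t + θ) - 1 = -(1 / (t + θ)) := by field_simp; ring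
  rw [h2] at h1
  have h4 : θ / ((t + θ) * (t + θ + 1)) < θ / ((t + θ) * (t + θ)) := by
    apply div_lt_div_of_pos_left hθ (by positivity)
    nlinarith
  have heq : t / (t + θ) ^ 2 + θ * (1 / (t + θ) - 1 / (t + θ + 1))
      = 1 / (t + θ) - θ / ((t + θ) * (t + θ)) + θ / ((t + θ) * (t + θ + 1)) := by
    field_simp
    ring
  linarith [heq, h4, h1]

theorem sum_frac_lt (a b : ℕ) (ha : 1 ≤ a) (hab : a ≤ b) (θ : ℝ) (hθ : 0 < θ) :
    ∑ i ∈ Finset.Icc a b, (i : ℝ) / (i + θ) ^ 2 <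
      Real.log ((b + θ) / ((a : ℝ) - 1 + θ)) - θ * ((b : ℝ) - a + 1) / ((a + θ) * (b + 1 + θ)) := by
  have hne : (Finset.Icc a b).Nonempty := ⟨a, by simp [hab]⟩
  have ha1 : (1 : ℝ) ≤ (a : ℝ) := by exact_mod_cast ha
  have hab' : (a : ℝ) ≤ (b : ℝ) := by exact_mod_cast hab
  set F : ℕ → ℝ := fun n => Real.log (θ + n) with hF
  set G : ℕ → ℝ := fun n => 1 / ((n : ℝ) + θ) with hG
  have key : ∀ i ∈ Finset.Icc a b,
      (i : ℝ) / (i + θ) ^ 2 < (F i - F (i - 1)) - θ * (G i - G (i + 1)) := by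
    intro i hi
    obtain ⟨hai, hib⟩ := Finset.mem_Icc.mp hi
    have hi1 : 1 ≤ i := le_trans ha hai
    have hcast : ((i - 1 : ℕ) : ℝ) = (i : ℝ) - 1 := by
      rw [Nat.cast_sub hi1]; norm_num
    have ht : (1 : ℝ) ≤ (i : ℝ) := by exact_mod_cast hi1
    have := term_lt θ (i : ℝ) hθ ht
    simp only [hF, hG, hcast]
    push_cast
    convert this using 2 <;> ring
  have hlt := Finset.sum_lt_sum_of_nonempty hne key
  have hsum : ∑ i ∈ Finset.Icc a b, ((F i - F (i - 1)) - θ * (G i - G (i + 1)))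
      = (F b - F (a - 1)) - θ * (G a - G (b + 1)) := by
    rw [Finset.sum_sub_distrib, tele1 F a b hab, ← Finset.mul_sum, tele2 G a b hab]
  rw [hsum] at hlt
  have hacast : ((a - 1 : ℕ) : ℝ) = (a : ℝ) - 1 := by
    rw [Nat.cast_sub ha]; norm_num
  have h0 : (0 : ℝ) < (a : ℝ) - 1 + θ := by linarith
  have hrhs : (F b - F (a - 1)) - θ * (G a - G (b + 1))
      = Real.log ((b + θ) / ((a : ℝ) - 1 + θ)) - θ * ((b : ℝ) - a + 1) / ((a + θ) * (b + 1 + θ)) := by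
    simp only [hF, hG, hacast]
    push_cast
    rw [Real.log_div (by linarith) (by linarith)]
    have h1 : (0 : ℝ) < (a : ℝ) + θ := by linarith
    have h2 : (0 : ℝ) < (b : ℝ) + 1 + θ := by linarith
    have hlog : Real.log (θ + (b : ℝ)) = Real.log ((b : ℝ) + θ) := by ring_nf
    have hlog2 : Real.log (θ + ((a : ℝ) - 1)) = Real.log ((a : ℝ) - 1 + θ) := by ring_nf
    rw [hlog, hlog2]
    have e1 : 1 / ((a : ℝ) + θ) - 1 / ((b : ℝ) + 1 + θ)
        = ((b : ℝ) - a + 1) / (((a : ℝ) + θ) * ((b : ℝ) + 1 + θ)) := by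
      rw [div_sub_div _ _ (ne_of_gt h1) (ne_of_gt h2),
        div_eq_div_iff (by positivity) (by positivity)]
      ring
    rw [e1, mul_div_assoc]
  rw [hrhs] at hlt
  exact hlt
end
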